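/- Under the weighted stochastic block model, the population matrices underlying the diagonalization step factor as follows: for distinct nodes 1, 2, 3, 4, (A_0)_{l_1,l_2} := E(α_{l_1}(X_{1,2}) α_{l_2}(X_{1,3})) satisfies A_0 = G diag(p) Gᵀ, and for each l' ∈ {1,…,l}, (A_{l'})_{l_1,l_2} := E(α_{l_1}(X_{1,2}) α_{l'}(X_{1,3}) α_{l_2}(X_{1,4})) satisfies A_{l'} = G D_{l'} diag(p) Gᵀ, where D_{l'} is the r×r diagonal matrix with diagonal entries (G)_{l',1},…,(G)_{l',r}. -/

import Mathlib

open MeasureTheory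

/-- The weighted stochastic block model on `n` nodes with `r` latent communities:
community labels `Z i` are i.i.d. with distribution `p`; edge weights `X i j = X j i`
are, conditionally on the labels, mutually independent with conditional CDF
`F (Z i) (Z j)` (encoded through the joint conditional CDF factorization `X_cond`). -/
structure SBM (Ω : Type) [MeasurableSpace Ω] (ℙ : Measure Ω) (n r : ℕ) where
  /-- the community distribution -/
  p : Fin r → ℝ
  /-- the community labels -/
  Z : Fin n → Ω → Fin r
  /-- the edge weights -/
  X : Fin n → Fin n → Ω → ℝ
  /-- the conditional CDFs -/
  F : Fin r → Fin r → ℝ → ℝ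
  prob : IsProbabilityMeasure ℙ
  p_pos : ∀ z, 0 < p z
  p_sum : ∑ z, p z = 1
  Z_meas : ∀ i, Measurable (Z i)
  X_meas : ∀ i j, Measurable (X i j)
  X_symm : ∀ i j, X i j = X j i
  F_symm : ∀ z₁ z₂, F z₁ z₂ = F z₂ z₁
  /-- the labels are i.i.d. with distribution `p` -/
  Z_iid : ∀ z : Fin n → Fin r,
    ℙ {ω | ∀ i, Z i ω = z i} = ENNReal.ofReal (∏ i, p (z i))
  /-- conditionally on the labels, the edge weights are mutually independent and the
  conditional CDF of `X i j` given `Z i = z i`, `Z j = z j` is `F (z i) (z j)` -/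
  X_cond : ∀ (z : Fin n → Fin r) (S : Finset (Fin n × Fin n)),
    (∀ q ∈ S, q.1 < q.2) → ∀ x : Fin n × Fin n → ℝ,
      ℙ ({ω | ∀ q ∈ S, X q.1 q.2 ω ≤ x q} ∩ {ω | ∀ i, Z i ω = z i})
        = ENNReal.ofReal ((∏ q ∈ S, F (z q.1) (z q.2) (x q)) * ∏ i, p (z i))

open Set

namespace SBMProof

variable {Ω : Type} [MeasurableSpace Ω] {ℙ : Measure Ω} {n r : ℕ}

/-- the probability of the label configuration `z` -/
def pev (sbm : SBM Ω ℙ n r) (z : Fin n → Fin r) : ℝ := ∏ i, sbm.p (z i)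

/-- the event that the label configuration is `z` -/
def Aev (sbm : SBM Ω ℙ n r) (z : Fin n → Fin r) : Set Ω := {ω | ∀ i, sbm.Z i ω = z i}

/-- the nonnegative part of the conditional CDF -/
def Nf (sbm : SBM Ω ℙ n r) (a b : Fin r) (x : ℝ) : ℝ := max (sbm.F a b x) 0

variable (sbm : SBM Ω ℙ n r)

lemma pev_def (z : Fin n → Fin r) : pev sbm z = ∏ i, sbm.p (z i) := rfl

lemma Aev_def (z : Fin n → Fin r) : Aev sbm z = {ω | ∀ i, sbm.Z i ω = z i} := rfl

lemma pev_pos (z : Fin n → Fin r) : 0 < pev sbm z :=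
  Finset.prod_pos fun _ _ => sbm.p_pos _

lemma pev_nonneg (z : Fin n → Fin r) : 0 ≤ pev sbm z := (pev_pos sbm z).le

lemma pev_ne (z : Fin n → Fin r) : pev sbm z ≠ 0 := (pev_pos sbm z).ne'

lemma Aev_meas (z : Fin n → Fin r) : MeasurableSet (Aev sbm z) := by
  have : Aev sbm z = ⋂ i, sbm.Z i ⁻¹' {z i} := by ext ω; simp [Aev]
  rw [this]
  exact MeasurableSet.iInter fun i => (sbm.Z_meas i) (measurableSet_singleton _)

lemma Aev_measure (z : Fin n → Fin r) : ℙ (Aev sbm z) = ENNReal.ofReal (pev sbm z) :=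
  sbm.Z_iid z

lemma Aev_disjoint {z z' : Fin n → Fin r} (h : z ≠ z') :
    Disjoint (Aev sbm z) (Aev sbm z') := by
  rw [Set.disjoint_left]
  intro ω hω hω'
  exact h (funext fun i => ((hω i).symm.trans (hω' i)))

lemma Aev_cover : ⋃ z, Aev sbm z = univ := by
  rw [eq_univ_iff_forall]
  intro ω
  exact mem_iUnion.mpr ⟨fun i => sbm.Z i ω, fun i => rfl⟩

/-- order a pair of indices -/
def ord (i j : Fin n) : Fin n × Fin n := if i < j then (i, j) else (j, i)

lemma ord_lt {i j : Fin n} (h : i ≠ j) : (ord i j).1 < (ord i j).2 := by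
  unfold ord; split_ifs with hlt
  · exact hlt
  · exact lt_of_le_of_ne (not_lt.mp hlt) h.symm

lemma ord_X (i j : Fin n) : sbm.X (ord i j).1 (ord i j).2 = sbm.X i j := by
  unfold ord; split_ifs
  · rfl
  · exact sbm.X_symm j i

lemma ord_F (z : Fin n → Fin r) (i j : Fin n) :
    sbm.F (z (ord i j).1) (z (ord i j).2) = sbm.F (z i) (z j) := by
  unfold ord; split_ifs
  · rfl
  · exact sbm.F_symm (z j) (z i)

lemma ord_ne {i j k : Fin n} (hij : i ≠ j) (hik : i ≠ k) (hjk : j ≠ k) :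
    ord i j ≠ ord i k := by
  unfold ord; split_ifs <;> intro h <;> injection h with h1 h2 <;> simp_all

lemma single_cdf {i j : Fin n} (hij : i ≠ j) (z : Fin n → Fin r) (x : ℝ) :
    ℙ ({ω | sbm.X i j ω ≤ x} ∩ Aev sbm z)
      = ENNReal.ofReal (sbm.F (z i) (z j) x * pev sbm z) := by
  have h := sbm.X_cond z {ord i j}
    (by rintro q hq; rw [Finset.mem_singleton] at hq; subst hq; exact ord_lt hij)
    (fun _ => x)
  rw [Finset.prod_singleton] at h
  have hset : {ω | ∀ q ∈ ({ord i j} : Finset (Fin n × Fin n)),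
      sbm.X q.1 q.2 ω ≤ (fun _ => x) q} = {ω | sbm.X i j ω ≤ x} := by
    ext ω
    simp only [Finset.mem_singleton, forall_eq, mem_setOf_eq, ord_X]
  rw [hset, ord_F] at h
  exact h

lemma single_N {i j : Fin n} (hij : i ≠ j) (z : Fin n → Fin r) (x : ℝ) :
    ℙ ({ω | sbm.X i j ω ≤ x} ∩ Aev sbm z)
      = ENNReal.ofReal (Nf sbm (z i) (z j) x) * ENNReal.ofReal (pev sbm z) := by
  rw [single_cdf sbm hij z x]
  rcases le_or_gt 0 (sbm.F (z i) (z j) x) with h | h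
  · rw [Nf, max_eq_left h, ENNReal.ofReal_mul h]
  · rw [Nf, max_eq_right h.le, ENNReal.ofReal_zero, zero_mul,
      ENNReal.ofReal_eq_zero.mpr (mul_nonpos_of_nonpos_of_nonneg h.le (pev_nonneg sbm z))]


lemma pair_N {i j k : Fin n} (hij : i ≠ j) (hik : i ≠ k) (hjk : j ≠ k)
    (z : Fin n → Fin r) (s t : ℝ) :
    ℙ ({ω | sbm.X i j ω ≤ s} ∩ {ω | sbm.X i k ω ≤ t} ∩ Aev sbm z)
      = ENNReal.ofReal (Nf sbm (z i) (z j) s) * ENNReal.ofReal (Nf sbm (z i) (z k) t)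
          * ENNReal.ofReal (pev sbm z) := by
  have hne : ord i j ≠ ord i k := ord_ne hij hik hjk
  have h := sbm.X_cond z {ord i j, ord i k}
    (by
      rintro q hq
      rcases Finset.mem_insert.mp hq with rfl | hq
      · exact ord_lt hij
      · rw [Finset.mem_singleton] at hq; subst hq; exact ord_lt hik)
    (fun q => if q = ord i j then s else t)
  rw [Finset.prod_insert (by simpa using hne), Finset.prod_singleton] at h
  simp only [if_pos rfl, if_neg (Ne.symm hne), if_true] at h
  have hset : {ω | ∀ q ∈ ({ord i j, ord i k} : Finset (Fin n × Fin n)),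
      sbm.X q.1 q.2 ω ≤ (if q = ord i j then s else t)}
      = {ω | sbm.X i j ω ≤ s} ∩ {ω | sbm.X i k ω ≤ t} := by
    ext ω
    simp only [Finset.mem_insert, Finset.mem_singleton, mem_setOf_eq, mem_inter_iff]
    constructor
    · intro hq
      refine ⟨?_, ?_⟩
      · have := hq (ord i j) (Or.inl rfl)
        rwa [if_pos rfl, ord_X] at this
      · have := hq (ord i k) (Or.inr rfl)
        rwa [if_neg (Ne.symm hne), ord_X] at this
    · rintro ⟨h1, h2⟩ q hq
      rcases hq with rfl | rfl
      · rwa [if_pos rfl, ord_X]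
      · rwa [if_neg (Ne.symm hne), ord_X]
  rw [hset, ord_F, ord_F] at h
  rcases lt_or_ge (sbm.F (z i) (z j) s) 0 with h1 | h1
  · have h0 : ℙ ({ω | sbm.X i j ω ≤ s} ∩ Aev sbm z) = 0 := by
      rw [single_cdf sbm hij z s]
      exact ENNReal.ofReal_eq_zero.mpr
        (mul_nonpos_of_nonpos_of_nonneg h1.le (pev_nonneg sbm z))
    rw [measure_mono_null (inter_subset_inter_left _ inter_subset_left) h0]
    rw [show Nf sbm (z i) (z j) s = 0 from max_eq_right h1.le, ENNReal.ofReal_zero,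
      zero_mul, zero_mul]
  rcases lt_or_ge (sbm.F (z i) (z k) t) 0 with h2 | h2
  · have h0 : ℙ ({ω | sbm.X i k ω ≤ t} ∩ Aev sbm z) = 0 := by
      rw [single_cdf sbm hik z t]
      exact ENNReal.ofReal_eq_zero.mpr
        (mul_nonpos_of_nonpos_of_nonneg h2.le (pev_nonneg sbm z))
    rw [measure_mono_null (inter_subset_inter_left _ inter_subset_right) h0]
    rw [show Nf sbm (z i) (z k) t = 0 from max_eq_right h2.le, ENNReal.ofReal_zero,
      mul_zero, zero_mul]
  · rw [Aev_def, pev_def, h, mul_assoc, ENNReal.ofReal_mul h1, ENNReal.ofReal_mul h2,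
      Nf, Nf, max_eq_left h1, max_eq_left h2, mul_assoc]

lemma triple_N {i j k m : Fin n} (hij : i ≠ j) (hik : i ≠ k) (him : i ≠ m)
    (hjk : j ≠ k) (hjm : j ≠ m) (hkm : k ≠ m)
    (z : Fin n → Fin r) (s t u : ℝ) :
    ℙ (({ω | sbm.X i j ω ≤ s} ∩ ({ω | sbm.X i k ω ≤ t} ∩ {ω | sbm.X i m ω ≤ u}))
        ∩ Aev sbm z)
      = ENNReal.ofReal (Nf sbm (z i) (z j) s)
          * (ENNReal.ofReal (Nf sbm (z i) (z k) t) * ENNReal.ofReal (Nf sbm (z i) (z m) u))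
          * ENNReal.ofReal (pev sbm z) := by
  have hne1 : ord i j ≠ ord i k := ord_ne hij hik hjk
  have hne2 : ord i j ≠ ord i m := ord_ne hij him hjm
  have hne3 : ord i k ≠ ord i m := ord_ne hik him hkm
  have h := sbm.X_cond z {ord i j, ord i k, ord i m}
    (by
      rintro q hq
      rcases Finset.mem_insert.mp hq with rfl | hq
      · exact ord_lt hij
      rcases Finset.mem_insert.mp hq with rfl | hq
      · exact ord_lt hik
      · rw [Finset.mem_singleton] at hq; subst hq; exact ord_lt him)
    (fun q => if q = ord i j then s else if q = ord i k then t else u)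
  rw [Finset.prod_insert (by simp [hne1, hne2]),
    Finset.prod_insert (by simpa using hne3), Finset.prod_singleton] at h
  simp only [if_pos rfl, if_neg (Ne.symm hne1), if_neg (Ne.symm hne2),
    if_neg (Ne.symm hne3), if_true] at h
  have hset : {ω | ∀ q ∈ ({ord i j, ord i k, ord i m} : Finset (Fin n × Fin n)),
      sbm.X q.1 q.2 ω ≤ (if q = ord i j then s else if q = ord i k then t else u)}
      = {ω | sbm.X i j ω ≤ s} ∩ ({ω | sbm.X i k ω ≤ t} ∩ {ω | sbm.X i m ω ≤ u}) := by
    ext ω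
    simp only [Finset.mem_insert, Finset.mem_singleton, mem_setOf_eq, mem_inter_iff]
    constructor
    · intro hq
      refine ⟨?_, ?_, ?_⟩
      · have := hq (ord i j) (Or.inl rfl)
        rwa [if_pos rfl, ord_X] at this
      · have := hq (ord i k) (Or.inr (Or.inl rfl))
        rwa [if_neg (Ne.symm hne1), if_pos rfl, ord_X] at this
      · have := hq (ord i m) (Or.inr (Or.inr rfl))
        rwa [if_neg (Ne.symm hne2), if_neg (Ne.symm hne3), ord_X] at this
    · rintro ⟨h1, h2, h3⟩ q hq
      rcases hq with rfl | rfl | rfl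
      · rwa [if_pos rfl, ord_X]
      · rwa [if_neg (Ne.symm hne1), if_pos rfl, ord_X]
      · rwa [if_neg (Ne.symm hne2), if_neg (Ne.symm hne3), ord_X]
  rw [hset, ord_F, ord_F, ord_F] at h
  rcases lt_or_ge (sbm.F (z i) (z j) s) 0 with h1 | h1
  · have h0 : ℙ ({ω | sbm.X i j ω ≤ s} ∩ Aev sbm z) = 0 := by
      rw [single_cdf sbm hij z s]
      exact ENNReal.ofReal_eq_zero.mpr
        (mul_nonpos_of_nonpos_of_nonneg h1.le (pev_nonneg sbm z))
    rw [measure_mono_null (inter_subset_inter_left _ inter_subset_left) h0]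
    rw [show Nf sbm (z i) (z j) s = 0 from max_eq_right h1.le, ENNReal.ofReal_zero,
      zero_mul, zero_mul]
  rcases lt_or_ge (sbm.F (z i) (z k) t) 0 with h2 | h2
  · have h0 : ℙ ({ω | sbm.X i k ω ≤ t} ∩ Aev sbm z) = 0 := by
      rw [single_cdf sbm hik z t]
      exact ENNReal.ofReal_eq_zero.mpr
        (mul_nonpos_of_nonpos_of_nonneg h2.le (pev_nonneg sbm z))
    have hsub : {ω | sbm.X i j ω ≤ s} ∩ ({ω | sbm.X i k ω ≤ t} ∩ {ω | sbm.X i m ω ≤ u})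
        ∩ Aev sbm z ⊆ {ω | sbm.X i k ω ≤ t} ∩ Aev sbm z :=
      inter_subset_inter_left _ (inter_subset_right.trans inter_subset_left)
    rw [measure_mono_null hsub h0]
    rw [show Nf sbm (z i) (z k) t = 0 from max_eq_right h2.le, ENNReal.ofReal_zero,
      zero_mul, mul_zero, zero_mul]
  rcases lt_or_ge (sbm.F (z i) (z m) u) 0 with h3 | h3
  · have h0 : ℙ ({ω | sbm.X i m ω ≤ u} ∩ Aev sbm z) = 0 := by
      rw [single_cdf sbm him z u]
      exact ENNReal.ofReal_eq_zero.mpr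
        (mul_nonpos_of_nonpos_of_nonneg h3.le (pev_nonneg sbm z))
    have hsub : {ω | sbm.X i j ω ≤ s} ∩ ({ω | sbm.X i k ω ≤ t} ∩ {ω | sbm.X i m ω ≤ u})
        ∩ Aev sbm z ⊆ {ω | sbm.X i m ω ≤ u} ∩ Aev sbm z :=
      inter_subset_inter_left _ (inter_subset_right.trans inter_subset_right)
    rw [measure_mono_null hsub h0]
    rw [show Nf sbm (z i) (z m) u = 0 from max_eq_right h3.le, ENNReal.ofReal_zero,
      mul_zero, mul_zero, zero_mul]
  · rw [Aev_def, pev_def, h, Nf, Nf, Nf, max_eq_left h1, max_eq_left h2, max_eq_left h3]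
    rw [show sbm.F (z i) (z j) s * (sbm.F (z i) (z k) t * sbm.F (z i) (z m) u)
          * ∏ i, sbm.p (z i)
        = sbm.F (z i) (z j) s * (sbm.F (z i) (z k) t * (sbm.F (z i) (z m) u
          * ∏ i, sbm.p (z i))) from by ring]
    rw [ENNReal.ofReal_mul h1, ENNReal.ofReal_mul h2, ENNReal.ofReal_mul h3]
    ring


lemma map_Iic {i j : Fin n} (hij : i ≠ j) (z : Fin n → Fin r) (x : ℝ) :
    (ℙ.restrict (Aev sbm z)).map (sbm.X i j) (Iic x)
      = ENNReal.ofReal (Nf sbm (z i) (z j) x) * ENNReal.ofReal (pev sbm z) := by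
  rw [Measure.map_apply (sbm.X_meas i j) measurableSet_Iic,
    Measure.restrict_apply (sbm.X_meas i j measurableSet_Iic)]
  exact single_N sbm hij z x

lemma map_finite (z : Fin n → Fin r) (T : Ω → ℝ) :
    IsFiniteMeasure ((ℙ.restrict (Aev sbm z)).map T) := by
  haveI := sbm.prob
  exact Measure.isFiniteMeasure_map _ _

lemma map_univ {i j : Fin n} (z : Fin n → Fin r) :
    (ℙ.restrict (Aev sbm z)).map (sbm.X i j) univ = ENNReal.ofReal (pev sbm z) := by
  rw [Measure.map_apply (sbm.X_meas i j) MeasurableSet.univ, preimage_univ,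
    Measure.restrict_apply MeasurableSet.univ, univ_inter, Aev_measure]

lemma map_transfer {i j i' j' : Fin n} (hij : i ≠ j) (hij' : i' ≠ j')
    (z z' : Fin n → Fin r)
    (hN : ∀ x, Nf sbm (z i) (z j) x = Nf sbm (z' i') (z' j') x) :
    (ℙ.restrict (Aev sbm z)).map (sbm.X i j)
      = (ENNReal.ofReal (pev sbm z) * (ENNReal.ofReal (pev sbm z'))⁻¹) •
        (ℙ.restrict (Aev sbm z')).map (sbm.X i' j') := by
  haveI := sbm.prob
  haveI := map_finite sbm z (sbm.X i j)
  have hP'0 : ENNReal.ofReal (pev sbm z') ≠ 0 := by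
    simp [ENNReal.ofReal_eq_zero, not_le, pev_pos sbm z']
  have hP't : ENNReal.ofReal (pev sbm z') ≠ ⊤ := ENNReal.ofReal_ne_top
  refine Measure.ext_of_Iic _ _ fun x => ?_
  rw [map_Iic sbm hij, Measure.smul_apply, map_Iic sbm hij', hN x, smul_eq_mul]
  calc ENNReal.ofReal (Nf sbm (z' i') (z' j') x) * ENNReal.ofReal (pev sbm z)
      = ENNReal.ofReal (Nf sbm (z' i') (z' j') x) * ENNReal.ofReal (pev sbm z)
        * ((ENNReal.ofReal (pev sbm z'))⁻¹ * ENNReal.ofReal (pev sbm z')) := by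
        rw [ENNReal.inv_mul_cancel hP'0 hP't, mul_one]
    _ = ENNReal.ofReal (pev sbm z) * (ENNReal.ofReal (pev sbm z'))⁻¹ *
        (ENNReal.ofReal (Nf sbm (z' i') (z' j') x) * ENNReal.ofReal (pev sbm z')) := by
        ring

lemma isCountablySpanning_Iic : IsCountablySpanning (range Iic : Set (Set ℝ)) := by
  refine ⟨fun k => Iic (k : ℝ), fun k => mem_range_self _, ?_⟩
  ext x
  simp only [mem_iUnion, mem_Iic, mem_univ, iff_true]
  exact exists_nat_ge x

lemma generateFrom_Iic_real :
    MeasurableSpace.generateFrom (range Iic : Set (Set ℝ))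
      = (inferInstance : MeasurableSpace ℝ) :=
  ((BorelSpace.measurable_eq (α := ℝ)).trans (borel_eq_generateFrom_Iic ℝ)).symm

lemma generateFrom_rect :
    MeasurableSpace.generateFrom
        (image2 (· ×ˢ ·) (range Iic : Set (Set ℝ)) (range Iic : Set (Set ℝ)))
      = (inferInstance : MeasurableSpace (ℝ × ℝ)) :=
  generateFrom_eq_prod generateFrom_Iic_real generateFrom_Iic_real
    isCountablySpanning_Iic isCountablySpanning_Iic

lemma isCountablySpanning_rect :
    IsCountablySpanning
      (image2 (· ×ˢ ·) (range Iic : Set (Set ℝ)) (range Iic : Set (Set ℝ))) := by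
  refine ⟨fun k => Iic (k : ℝ) ×ˢ Iic (k : ℝ),
    fun k => mem_image2_of_mem (mem_range_self _) (mem_range_self _), ?_⟩
  ext x
  simp only [mem_iUnion, mem_prod, mem_Iic, mem_univ, iff_true]
  obtain ⟨k, hk⟩ := exists_nat_ge (max x.1 x.2)
  exact ⟨k, (le_max_left _ _).trans hk, (le_max_right _ _).trans hk⟩

lemma map_pair {i j k : Fin n} (hij : i ≠ j) (hik : i ≠ k) (hjk : j ≠ k)
    (z : Fin n → Fin r) :
    ENNReal.ofReal (pev sbm z) •
        (ℙ.restrict (Aev sbm z)).map (fun ω => (sbm.X i j ω, sbm.X i k ω))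
      = ((ℙ.restrict (Aev sbm z)).map (sbm.X i j)).prod
          ((ℙ.restrict (Aev sbm z)).map (sbm.X i k)) := by
  haveI := sbm.prob
  haveI := map_finite sbm z (sbm.X i j)
  haveI := map_finite sbm z (sbm.X i k)
  have hpm : Measurable (fun ω => (sbm.X i j ω, sbm.X i k ω)) :=
    (sbm.X_meas i j).prodMk (sbm.X_meas i k)
  haveI : IsFiniteMeasure (ENNReal.ofReal (pev sbm z) •
      (ℙ.restrict (Aev sbm z)).map (fun ω => (sbm.X i j ω, sbm.X i k ω))) := by
    refine ⟨?_⟩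
    rw [Measure.smul_apply, smul_eq_mul]
    exact ENNReal.mul_lt_top ENNReal.ofReal_lt_top (measure_lt_top _ _)
  refine MeasureTheory.ext_of_generate_finite _ generateFrom_rect.symm
    (isPiSystem_Iic.prod isPiSystem_Iic) ?_ ?_
  · rintro _ ⟨_, ⟨a, rfl⟩, _, ⟨b, rfl⟩, rfl⟩
    rw [Measure.smul_apply, smul_eq_mul,
      Measure.map_apply hpm (measurableSet_Iic.prod measurableSet_Iic),
      mk_preimage_prod, Measure.restrict_apply
        ((sbm.X_meas i j measurableSet_Iic).inter (sbm.X_meas i k measurableSet_Iic)),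
      Measure.prod_prod, map_Iic sbm hij, map_Iic sbm hik]
    rw [show (sbm.X i j ⁻¹' Iic a ∩ sbm.X i k ⁻¹' Iic b) ∩ Aev sbm z
        = {ω | sbm.X i j ω ≤ a} ∩ {ω | sbm.X i k ω ≤ b} ∩ Aev sbm z from rfl]
    rw [pair_N sbm hij hik hjk z a b]
    ring
  · rw [Measure.smul_apply, smul_eq_mul,
      Measure.map_apply hpm MeasurableSet.univ, preimage_univ,
      Measure.restrict_apply MeasurableSet.univ, univ_inter, Aev_measure,
      ← univ_prod_univ, Measure.prod_prod, map_univ sbm z, map_univ sbm z]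

lemma map_triple {i j k m : Fin n} (hij : i ≠ j) (hik : i ≠ k) (him : i ≠ m)
    (hjk : j ≠ k) (hjm : j ≠ m) (hkm : k ≠ m) (z : Fin n → Fin r) :
    (ENNReal.ofReal (pev sbm z) * ENNReal.ofReal (pev sbm z)) •
        (ℙ.restrict (Aev sbm z)).map
          (fun ω => (sbm.X i j ω, sbm.X i k ω, sbm.X i m ω))
      = ((ℙ.restrict (Aev sbm z)).map (sbm.X i j)).prod
          (((ℙ.restrict (Aev sbm z)).map (sbm.X i k)).prod
            ((ℙ.restrict (Aev sbm z)).map (sbm.X i m))) := by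
  haveI := sbm.prob
  haveI := map_finite sbm z (sbm.X i j)
  haveI := map_finite sbm z (sbm.X i k)
  haveI := map_finite sbm z (sbm.X i m)
  have hpm : Measurable (fun ω => (sbm.X i j ω, sbm.X i k ω, sbm.X i m ω)) :=
    (sbm.X_meas i j).prodMk ((sbm.X_meas i k).prodMk (sbm.X_meas i m))
  haveI : IsFiniteMeasure ((ENNReal.ofReal (pev sbm z) * ENNReal.ofReal (pev sbm z)) •
      (ℙ.restrict (Aev sbm z)).map
        (fun ω => (sbm.X i j ω, sbm.X i k ω, sbm.X i m ω))) := by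
    refine ⟨?_⟩
    rw [Measure.smul_apply, smul_eq_mul]
    exact ENNReal.mul_lt_top
      (ENNReal.mul_lt_top ENNReal.ofReal_lt_top ENNReal.ofReal_lt_top)
      (measure_lt_top _ _)
  have hgen3 : MeasurableSpace.generateFrom
      (image2 (· ×ˢ ·) (range Iic : Set (Set ℝ))
        (image2 (· ×ˢ ·) (range Iic : Set (Set ℝ)) (range Iic : Set (Set ℝ))))
      = (inferInstance : MeasurableSpace (ℝ × ℝ × ℝ)) :=
    generateFrom_eq_prod generateFrom_Iic_real generateFrom_rect
      isCountablySpanning_Iic isCountablySpanning_rect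
  refine MeasureTheory.ext_of_generate_finite _ hgen3.symm
    (isPiSystem_Iic.prod (isPiSystem_Iic.prod isPiSystem_Iic)) ?_ ?_
  · rintro _ ⟨_, ⟨a, rfl⟩, _, ⟨_, ⟨b, rfl⟩, _, ⟨c, rfl⟩, rfl⟩, rfl⟩
    rw [Measure.smul_apply, smul_eq_mul,
      Measure.map_apply hpm
        (measurableSet_Iic.prod (measurableSet_Iic.prod measurableSet_Iic)),
      Measure.prod_prod, Measure.prod_prod,
      map_Iic sbm hij, map_Iic sbm hik, map_Iic sbm him,
      Measure.restrict_apply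
        (hpm (measurableSet_Iic.prod (measurableSet_Iic.prod measurableSet_Iic)))]
    rw [show (fun ω => (sbm.X i j ω, sbm.X i k ω, sbm.X i m ω)) ⁻¹'
          (Iic a ×ˢ (Iic b ×ˢ Iic c)) ∩ Aev sbm z
        = {ω | sbm.X i j ω ≤ a} ∩ ({ω | sbm.X i k ω ≤ b} ∩ {ω | sbm.X i m ω ≤ c})
          ∩ Aev sbm z from rfl]
    rw [triple_N sbm hij hik him hjk hjm hkm z a b c]
    ring
  · rw [Measure.smul_apply, smul_eq_mul,
      Measure.map_apply hpm MeasurableSet.univ, preimage_univ,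
      Measure.restrict_apply MeasurableSet.univ, univ_inter, Aev_measure,
      ← univ_prod_univ, Measure.prod_prod, ← univ_prod_univ, Measure.prod_prod,
      map_univ sbm z, map_univ sbm z, map_univ sbm z]
    ring


lemma integral_single {i j : Fin n} (hij : i ≠ j) (z : Fin n → Fin r) {f : ℝ → ℝ}
    (hf : Measurable f) :
    ∫ ω in Aev sbm z, f (sbm.X i j ω) ∂ℙ
      = ∫ x, f x ∂((ℙ.restrict (Aev sbm z)).map (sbm.X i j)) :=
  (integral_map (sbm.X_meas i j).aemeasurable hf.aestronglyMeasurable).symm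

lemma exists_e {f : ℝ → ℝ} (hf : Measurable f) (i0 j0 : Fin n) (h0 : i0 ≠ j0) :
    ∃ e : Fin r → Fin r → ℝ, ∀ i j, i ≠ j → ∀ z : Fin n → Fin r,
      ∫ ω in Aev sbm z, f (sbm.X i j ω) ∂ℙ = pev sbm z * e (z i) (z j) := by
  refine ⟨fun a b => (pev sbm (fun t => if t = i0 then a else b))⁻¹ *
    ∫ ω in Aev sbm (fun t => if t = i0 then a else b), f (sbm.X i0 j0 ω) ∂ℙ, ?_⟩
  intro i j hij z
  set zc : Fin n → Fin r := fun t => if t = i0 then z i else z j with hzc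
  have hzi : zc i0 = z i := if_pos rfl
  have hzj : zc j0 = z j := if_neg h0.symm
  have hN : ∀ x, Nf sbm (z i) (z j) x = Nf sbm (zc i0) (zc j0) x := by
    intro x; rw [hzi, hzj]
  have ht := map_transfer sbm hij h0 z zc hN
  rw [integral_single sbm hij z hf, ht, integral_smul_measure,
    ← integral_single sbm h0 zc hf]
  rw [ENNReal.toReal_mul, ENNReal.toReal_ofReal (pev_nonneg sbm z),
    ENNReal.toReal_inv, ENNReal.toReal_ofReal (pev_nonneg sbm zc)]
  rw [smul_eq_mul]
  ring

lemma integral_pair {i j k : Fin n} (hij : i ≠ j) (hik : i ≠ k) (hjk : j ≠ k)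
    (z : Fin n → Fin r) {f g : ℝ → ℝ} (hf : Measurable f) (hg : Measurable g) :
    ∫ ω in Aev sbm z, f (sbm.X i j ω) * g (sbm.X i k ω) ∂ℙ
      = (pev sbm z)⁻¹ * ((∫ ω in Aev sbm z, f (sbm.X i j ω) ∂ℙ)
          * (∫ ω in Aev sbm z, g (sbm.X i k ω) ∂ℙ)) := by
  haveI := sbm.prob
  haveI := map_finite sbm z (sbm.X i j)
  haveI := map_finite sbm z (sbm.X i k)
  have hpm : Measurable (fun ω => (sbm.X i j ω, sbm.X i k ω)) :=
    (sbm.X_meas i j).prodMk (sbm.X_meas i k)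
  have hc0 : ENNReal.ofReal (pev sbm z) ≠ 0 := by
    simp [ENNReal.ofReal_eq_zero, not_le, pev_pos sbm z]
  have hmap : (ℙ.restrict (Aev sbm z)).map (fun ω => (sbm.X i j ω, sbm.X i k ω))
      = (ENNReal.ofReal (pev sbm z))⁻¹ •
        (((ℙ.restrict (Aev sbm z)).map (sbm.X i j)).prod
          ((ℙ.restrict (Aev sbm z)).map (sbm.X i k))) := by
    rw [← map_pair sbm hij hik hjk z, smul_smul,
      ENNReal.inv_mul_cancel hc0 ENNReal.ofReal_ne_top, one_smul]
  have hint : ∫ ω in Aev sbm z, f (sbm.X i j ω) * g (sbm.X i k ω) ∂ℙ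
      = ∫ p, f p.1 * g p.2
          ∂((ℙ.restrict (Aev sbm z)).map (fun ω => (sbm.X i j ω, sbm.X i k ω))) :=
    (integral_map hpm.aemeasurable
      ((hf.comp measurable_fst).mul (hg.comp measurable_snd)).aestronglyMeasurable).symm
  rw [hint, hmap, integral_smul_measure, integral_prod_mul,
    ← integral_single sbm hij z hf, ← integral_single sbm hik z hg,
    ENNReal.toReal_inv, ENNReal.toReal_ofReal (pev_nonneg sbm z), smul_eq_mul]

lemma integral_triple {i j k m : Fin n} (hij : i ≠ j) (hik : i ≠ k) (him : i ≠ m)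
    (hjk : j ≠ k) (hjm : j ≠ m) (hkm : k ≠ m)
    (z : Fin n → Fin r) {f g h : ℝ → ℝ}
    (hf : Measurable f) (hg : Measurable g) (hh : Measurable h) :
    ∫ ω in Aev sbm z, f (sbm.X i j ω) * (g (sbm.X i k ω) * h (sbm.X i m ω)) ∂ℙ
      = (pev sbm z)⁻¹ * ((pev sbm z)⁻¹ * ((∫ ω in Aev sbm z, f (sbm.X i j ω) ∂ℙ)
          * ((∫ ω in Aev sbm z, g (sbm.X i k ω) ∂ℙ)
            * (∫ ω in Aev sbm z, h (sbm.X i m ω) ∂ℙ)))) := by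
  haveI := sbm.prob
  haveI := map_finite sbm z (sbm.X i j)
  haveI := map_finite sbm z (sbm.X i k)
  haveI := map_finite sbm z (sbm.X i m)
  have hpm : Measurable (fun ω => (sbm.X i j ω, sbm.X i k ω, sbm.X i m ω)) :=
    (sbm.X_meas i j).prodMk ((sbm.X_meas i k).prodMk (sbm.X_meas i m))
  have hc0 : ENNReal.ofReal (pev sbm z) * ENNReal.ofReal (pev sbm z) ≠ 0 := by
    simp [ENNReal.ofReal_eq_zero, not_le, pev_pos sbm z]
  have hct : ENNReal.ofReal (pev sbm z) * ENNReal.ofReal (pev sbm z) ≠ ⊤ :=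
    ENNReal.mul_ne_top ENNReal.ofReal_ne_top ENNReal.ofReal_ne_top
  have hmap : (ℙ.restrict (Aev sbm z)).map
        (fun ω => (sbm.X i j ω, sbm.X i k ω, sbm.X i m ω))
      = (ENNReal.ofReal (pev sbm z) * ENNReal.ofReal (pev sbm z))⁻¹ •
        (((ℙ.restrict (Aev sbm z)).map (sbm.X i j)).prod
          (((ℙ.restrict (Aev sbm z)).map (sbm.X i k)).prod
            ((ℙ.restrict (Aev sbm z)).map (sbm.X i m)))) := by
    rw [← map_triple sbm hij hik him hjk hjm hkm z, smul_smul,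
      ENNReal.inv_mul_cancel hc0 hct, one_smul]
  have hint : ∫ ω in Aev sbm z, f (sbm.X i j ω) * (g (sbm.X i k ω) * h (sbm.X i m ω)) ∂ℙ
      = ∫ p, f p.1 * (g p.2.1 * h p.2.2)
          ∂((ℙ.restrict (Aev sbm z)).map
            (fun ω => (sbm.X i j ω, sbm.X i k ω, sbm.X i m ω))) :=
    (integral_map hpm.aemeasurable
      ((hf.comp measurable_fst).mul
        ((hg.comp (measurable_fst.comp measurable_snd)).mul
          (hh.comp (measurable_snd.comp measurable_snd)))).aestronglyMeasurable).symm
  have hprodmul : ∫ p : ℝ × ℝ × ℝ, f p.1 * (g p.2.1 * h p.2.2)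
        ∂(((ℙ.restrict (Aev sbm z)).map (sbm.X i j)).prod
          (((ℙ.restrict (Aev sbm z)).map (sbm.X i k)).prod
            ((ℙ.restrict (Aev sbm z)).map (sbm.X i m))))
      = (∫ x, f x ∂((ℙ.restrict (Aev sbm z)).map (sbm.X i j)))
        * ∫ q : ℝ × ℝ, g q.1 * h q.2
            ∂(((ℙ.restrict (Aev sbm z)).map (sbm.X i k)).prod
              ((ℙ.restrict (Aev sbm z)).map (sbm.X i m))) :=
    integral_prod_mul f (fun q : ℝ × ℝ => g q.1 * h q.2)
  rw [hint, hmap, integral_smul_measure, hprodmul, integral_prod_mul,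
    ← integral_single sbm hij z hf, ← integral_single sbm hik z hg,
    ← integral_single sbm him z hh,
    ENNReal.toReal_inv, ENNReal.toReal_mul,
    ENNReal.toReal_ofReal (pev_nonneg sbm z), smul_eq_mul, mul_inv]
  ring

lemma integral_partition (F : Ω → ℝ) (hF : Integrable F ℙ) :
    ∫ ω, F ω ∂ℙ = ∑ z : Fin n → Fin r, ∫ ω in Aev sbm z, F ω ∂ℙ := by
  rw [← setIntegral_univ, ← Aev_cover sbm,
    integral_iUnion_fintype (fun z => Aev_meas sbm z)
      (fun z z' h => Aev_disjoint sbm h) (fun z => hF.integrableOn)]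

lemma master {i₁ i₂ i₃ i₄ : Fin n} (h12 : i₁ ≠ i₂) (h13 : i₁ ≠ i₃) (h14 : i₁ ≠ i₄)
    (h23 : i₂ ≠ i₃) (h24 : i₂ ≠ i₄) (h34 : i₃ ≠ i₄) (u v w x : Fin r → ℝ) :
    ∑ z : Fin n → Fin r, pev sbm z * (u (z i₁) * v (z i₂) * w (z i₃) * x (z i₄))
      = (∑ a, sbm.p a * u a) * (∑ a, sbm.p a * v a) * (∑ a, sbm.p a * w a)
        * (∑ a, sbm.p a * x a) := by
  classical
  have key : ∀ z : Fin n → Fin r,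
      pev sbm z * (u (z i₁) * v (z i₂) * w (z i₃) * x (z i₄))
      = ∏ i, (sbm.p (z i) * ((if i = i₁ then u (z i) else 1)
          * (if i = i₂ then v (z i) else 1) * (if i = i₃ then w (z i) else 1)
          * (if i = i₄ then x (z i) else 1))) := by
    intro z
    rw [Finset.prod_mul_distrib, Finset.prod_mul_distrib, Finset.prod_mul_distrib,
      Finset.prod_mul_distrib, Finset.prod_ite_eq' Finset.univ i₁ (fun i => u (z i)),
      Finset.prod_ite_eq' Finset.univ i₂ (fun i => v (z i)),
      Finset.prod_ite_eq' Finset.univ i₃ (fun i => w (z i)),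
      Finset.prod_ite_eq' Finset.univ i₄ (fun i => x (z i))]
    simp only [Finset.mem_univ, if_true]
    rw [pev_def]
  rw [Finset.sum_congr rfl (fun z _ => key z)]
  have hps : ∑ j, sbm.p j = 1 := sbm.p_sum
  have hterm : ∀ i : Fin n, (∑ j, sbm.p j * ((if i = i₁ then u j else 1)
      * (if i = i₂ then v j else 1) * (if i = i₃ then w j else 1)
      * (if i = i₄ then x j else 1)))
      = (if i = i₁ then ∑ a, sbm.p a * u a else 1)
        * (if i = i₂ then ∑ a, sbm.p a * v a else 1)
        * (if i = i₃ then ∑ a, sbm.p a * w a else 1)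
        * (if i = i₄ then ∑ a, sbm.p a * x a else 1) := by
    intro i
    by_cases e1 : i = i₁
    · subst e1; simp [if_neg h12, if_neg h13, if_neg h14]
    by_cases e2 : i = i₂
    · subst e2; simp [if_neg e1, if_neg h23, if_neg h24]
    by_cases e3 : i = i₃
    · subst e3; simp [if_neg e1, if_neg e2, if_neg h34]
    by_cases e4 : i = i₄
    · subst e4; simp [if_neg e1, if_neg e2, if_neg e3]
    · simp [if_neg e1, if_neg e2, if_neg e3, if_neg e4, hps]
  calc ∑ z : Fin n → Fin r, ∏ i, (sbm.p (z i) * ((if i = i₁ then u (z i) else 1)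
          * (if i = i₂ then v (z i) else 1) * (if i = i₃ then w (z i) else 1)
          * (if i = i₄ then x (z i) else 1)))
      = ∏ i, ∑ j, (sbm.p j * ((if i = i₁ then u j else 1)
          * (if i = i₂ then v j else 1) * (if i = i₃ then w j else 1)
          * (if i = i₄ then x j else 1))) := by
        rw [Finset.prod_univ_sum]
        rw [Fintype.piFinset_univ]
    _ = ∏ i, ((if i = i₁ then ∑ a, sbm.p a * u a else 1)
        * (if i = i₂ then ∑ a, sbm.p a * v a else 1)
        * (if i = i₃ then ∑ a, sbm.p a * w a else 1)
        * (if i = i₄ then ∑ a, sbm.p a * x a else 1)) :=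
        Finset.prod_congr rfl (fun i _ => hterm i)
    _ = (∑ a, sbm.p a * u a) * (∑ a, sbm.p a * v a) * (∑ a, sbm.p a * w a)
        * (∑ a, sbm.p a * x a) := by
        rw [Finset.prod_mul_distrib, Finset.prod_mul_distrib, Finset.prod_mul_distrib,
          Finset.prod_ite_eq' Finset.univ i₁ (fun _ => ∑ a, sbm.p a * u a),
          Finset.prod_ite_eq' Finset.univ i₂ (fun _ => ∑ a, sbm.p a * v a),
          Finset.prod_ite_eq' Finset.univ i₃ (fun _ => ∑ a, sbm.p a * w a),
          Finset.prod_ite_eq' Finset.univ i₄ (fun _ => ∑ a, sbm.p a * x a)]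
        simp only [Finset.mem_univ, if_true]


lemma integrable_bdd (sbm : SBM Ω ℙ n r) (g : Ω → ℝ) (hg : Measurable g) (C : ℝ) (hC : ∀ ω, |g ω| ≤ C) :
    Integrable g ℙ := by
  haveI := sbm.prob
  exact Integrable.mono' (integrable_const C) hg.aestronglyMeasurable
    (Filter.Eventually.of_forall fun ω => by simpa using hC ω)

lemma Zset_decomp (i₀ : Fin n) (a : Fin r) :
    {ω | sbm.Z i₀ ω = a} = ⋃ z : {z : Fin n → Fin r // z i₀ = a}, Aev sbm z.1 := by
  ext ω
  simp only [mem_setOf_eq, mem_iUnion]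
  constructor
  · intro h
    exact ⟨⟨fun i => sbm.Z i ω, h⟩, fun i => rfl⟩
  · rintro ⟨z, hz⟩
    rw [hz i₀, z.2]

lemma fiber_disj (i₀ : Fin n) (a : Fin r) :
    Pairwise (Function.onFun Disjoint
      (fun z : {z : Fin n → Fin r // z i₀ = a} => Aev sbm z.1)) :=
  fun _ _ h => Aev_disjoint sbm (fun hh => h (Subtype.ext hh))

lemma fiber_sum {i₁ i₂ i₃ i₄ : Fin n} (h12 : i₁ ≠ i₂) (h13 : i₁ ≠ i₃) (h14 : i₁ ≠ i₄)
    (h23 : i₂ ≠ i₃) (h24 : i₂ ≠ i₄) (h34 : i₃ ≠ i₄) (a : Fin r) (v : Fin r → ℝ) :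
    ∑ z : {z : Fin n → Fin r // z i₁ = a}, pev sbm z.1 * v (z.1 i₂)
      = sbm.p a * ∑ b, sbm.p b * v b := by
  classical
  have hsub := Finset.sum_subtype
    (p := fun z : Fin n → Fin r => z i₁ = a)
    (F := inferInstance)
    (Finset.univ.filter (fun z : Fin n → Fin r => z i₁ = a))
    (fun z => by simp) (fun zz : Fin n → Fin r => pev sbm zz * v (zz i₂))
  rw [← hsub, Finset.sum_filter]
  have hpt : ∀ z : Fin n → Fin r,
      (if z i₁ = a then pev sbm z * v (z i₂) else 0)
      = pev sbm z * ((if z i₁ = a then (1:ℝ) else 0) * v (z i₂)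
          * (fun _ => (1:ℝ)) (z i₃) * (fun _ => (1:ℝ)) (z i₄)) := by
    intro z
    by_cases h : z i₁ = a <;> simp [h]
  rw [Finset.sum_congr rfl (fun z _ => hpt z),
    master sbm h12 h13 h14 h23 h24 h34 (fun t => if t = a then (1:ℝ) else 0) v
      (fun _ => 1) (fun _ => 1)]
  have h1 : ∑ t, sbm.p t * (if t = a then (1:ℝ) else 0) = sbm.p a := by
    simp [mul_ite, Finset.sum_ite_eq']
  have h2 : ∑ t, sbm.p t * (1:ℝ) = 1 := by simp [sbm.p_sum]
  rw [h1, h2, mul_one, mul_one]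

lemma Zset_measure {i₁ i₂ i₃ i₄ : Fin n} (h12 : i₁ ≠ i₂) (h13 : i₁ ≠ i₃) (h14 : i₁ ≠ i₄)
    (h23 : i₂ ≠ i₃) (h24 : i₂ ≠ i₄) (h34 : i₃ ≠ i₄) (a : Fin r) :
    ℙ {ω | sbm.Z i₁ ω = a} = ENNReal.ofReal (sbm.p a) := by
  rw [Zset_decomp sbm i₁ a,
    measure_iUnion (fiber_disj sbm i₁ a) (fun z => Aev_meas sbm z.1), tsum_fintype,
    Finset.sum_congr rfl (fun z _ => Aev_measure sbm z.1),
    ← ENNReal.ofReal_sum_of_nonneg (fun z _ => pev_nonneg sbm z.1)]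
  congr 1
  have h := fiber_sum sbm h12 h13 h14 h23 h24 h34 a (fun _ => (1:ℝ))
  simpa [sbm.p_sum] using h

end SBMProof

open SBMProof

/-- Under the weighted stochastic block model, the population matrices
underlying the diagonalization step factor as `A₀ = G * diag p * Gᵀ` and
`A_{l'} = G * D_{l'} * diag p * Gᵀ`, where `(A₀) l₁ l₂ = E(α_{l₁}(X₁₂) α_{l₂}(X₁₃))`,
`(A_{l'}) l₁ l₂ = E(α_{l₁}(X₁₂) α_{l'}(X₁₃) α_{l₂}(X₁₄))`,
`(G) l' z = E(α_{l'}(X_{i,j}) | Z i = z)` and `D_{l'} = diag ((G) l' 1, …, (G) l' r)`. -/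
theorem diagonalization_population_matrices
    {Ω : Type} [MeasurableSpace Ω] {ℙ : Measure Ω} {n r l : ℕ}
    (sbm : SBM Ω ℙ n r) (hn : 4 ≤ n)
    (α : Fin l → ℝ → ℝ)
    (hα_meas : ∀ l', Measurable (α l'))
    (hα_bdd : ∀ l', ∃ C, ∀ u, |α l' u| ≤ C)
    (G : Matrix (Fin l) (Fin r) ℝ)
    (hG : ∀ i j, i ≠ j → ∀ l' z,
      G l' z = (∫ ω in {ω | sbm.Z i ω = z}, α l' (sbm.X i j ω) ∂ℙ)
                  / (ℙ {ω | sbm.Z i ω = z}).toReal)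
    (i₁ i₂ i₃ i₄ : Fin n)
    (h12 : i₁ ≠ i₂) (h13 : i₁ ≠ i₃) (h14 : i₁ ≠ i₄)
    (h23 : i₂ ≠ i₃) (h24 : i₂ ≠ i₄) (h34 : i₃ ≠ i₄)
    (l₁ l₂ : Fin l) :
    (∫ ω, α l₁ (sbm.X i₁ i₂ ω) * α l₂ (sbm.X i₁ i₃ ω) ∂ℙ
        = (G * Matrix.diagonal sbm.p * G.transpose) l₁ l₂) ∧
    ∀ l' : Fin l,
      ∫ ω, α l₁ (sbm.X i₁ i₂ ω) * α l' (sbm.X i₁ i₃ ω) * α l₂ (sbm.X i₁ i₄ ω) ∂ℙ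
        = (G * Matrix.diagonal (fun z => G l' z) * Matrix.diagonal sbm.p
            * G.transpose) l₁ l₂ := by
  classical
  haveI := sbm.prob
  have He : ∀ l' : Fin l, ∃ e : Fin r → Fin r → ℝ, ∀ i j, i ≠ j → ∀ z : Fin n → Fin r,
      ∫ ω in Aev sbm z, α l' (sbm.X i j ω) ∂ℙ = pev sbm z * e (z i) (z j) :=
    fun l' => exists_e sbm (hα_meas l') i₁ i₂ h12
  choose e he using He
  -- the formula for G
  have hG2 : ∀ (l' : Fin l) (a : Fin r), G l' a = ∑ b, sbm.p b * e l' a b := by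
    intro l' a
    obtain ⟨C, hC⟩ := hα_bdd l'
    have hint : Integrable (fun ω => α l' (sbm.X i₁ i₂ ω)) ℙ :=
      integrable_bdd sbm _ ((hα_meas l').comp (sbm.X_meas i₁ i₂)) C (fun ω => hC _)
    have hnum : ∫ ω in {ω | sbm.Z i₁ ω = a}, α l' (sbm.X i₁ i₂ ω) ∂ℙ
        = sbm.p a * ∑ b, sbm.p b * e l' a b := by
      rw [Zset_decomp sbm i₁ a,
        integral_iUnion_fintype (fun z : {z : Fin n → Fin r // z i₁ = a} => Aev_meas sbm z.1)
          (fiber_disj sbm i₁ a) (fun z => hint.integrableOn)]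
      have hcg : (∑ z : {z : Fin n → Fin r // z i₁ = a},
            ∫ ω in Aev sbm z.1, α l' (sbm.X i₁ i₂ ω) ∂ℙ)
          = ∑ z : {z : Fin n → Fin r // z i₁ = a}, pev sbm z.1 * e l' a (z.1 i₂) :=
        Finset.sum_congr rfl (fun z _ => by rw [he l' i₁ i₂ h12 z.1, z.2])
      rw [hcg]
      exact fiber_sum sbm h12 h13 h14 h23 h24 h34 a (fun b => e l' a b)
    rw [hG i₁ i₂ h12 l' a, hnum, Zset_measure sbm h12 h13 h14 h23 h24 h34 a,
      ENNReal.toReal_ofReal (sbm.p_pos a).le,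
      mul_div_cancel_left₀ _ (sbm.p_pos a).ne']
  -- matrix entries
  have hmat1 : (G * Matrix.diagonal sbm.p * G.transpose) l₁ l₂
      = ∑ a, G l₁ a * sbm.p a * G l₂ a := by
    rw [Matrix.mul_apply]
    exact Finset.sum_congr rfl (fun a _ => by
      rw [Matrix.mul_diagonal, Matrix.transpose_apply])
  have hmat2 : ∀ l' : Fin l,
      (G * Matrix.diagonal (fun z => G l' z) * Matrix.diagonal sbm.p
        * G.transpose) l₁ l₂
      = ∑ a, G l₁ a * G l' a * sbm.p a * G l₂ a := by
    intro l'
    rw [Matrix.mul_apply]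
    exact Finset.sum_congr rfl (fun a _ => by
      rw [Matrix.mul_diagonal, Matrix.mul_diagonal, Matrix.transpose_apply])
  obtain ⟨C₁, hC₁⟩ := hα_bdd l₁
  obtain ⟨C₂, hC₂⟩ := hα_bdd l₂
  constructor
  · -- first identity
    have hInt12 : Integrable (fun ω => α l₁ (sbm.X i₁ i₂ ω) * α l₂ (sbm.X i₁ i₃ ω)) ℙ := by
      refine integrable_bdd sbm _
        (((hα_meas l₁).comp (sbm.X_meas i₁ i₂)).mul
          ((hα_meas l₂).comp (sbm.X_meas i₁ i₃))) (C₁ * C₂) (fun ω => ?_)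
      rw [abs_mul]
      exact mul_le_mul (hC₁ _) (hC₂ _) (abs_nonneg _)
        (le_trans (abs_nonneg (α l₁ (sbm.X i₁ i₂ ω))) (hC₁ (sbm.X i₁ i₂ ω)))
    have key1 : ∫ ω, α l₁ (sbm.X i₁ i₂ ω) * α l₂ (sbm.X i₁ i₃ ω) ∂ℙ
        = ∑ a, sbm.p a * ((∑ b, sbm.p b * e l₁ a b) * (∑ b, sbm.p b * e l₂ a b)) := by
      rw [integral_partition sbm _ hInt12]
      have step1 : ∀ z : Fin n → Fin r,
          ∫ ω in Aev sbm z, α l₁ (sbm.X i₁ i₂ ω) * α l₂ (sbm.X i₁ i₃ ω) ∂ℙ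
          = pev sbm z * (e l₁ (z i₁) (z i₂) * e l₂ (z i₁) (z i₃)) := by
        intro z
        rw [integral_pair sbm h12 h13 h23 z (hα_meas l₁) (hα_meas l₂),
          he l₁ i₁ i₂ h12 z, he l₂ i₁ i₃ h13 z]
        have hne := pev_ne sbm z
        field_simp
      rw [Finset.sum_congr rfl (fun z _ => step1 z)]
      have ins : ∀ z : Fin n → Fin r,
          pev sbm z * (e l₁ (z i₁) (z i₂) * e l₂ (z i₁) (z i₃))
          = ∑ a, pev sbm z * ((if z i₁ = a then (1:ℝ) else 0) * e l₁ a (z i₂)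
              * e l₂ a (z i₃) * 1) := by
        intro z
        rw [← Finset.mul_sum]
        congr 1
        have hpt : ∀ a : Fin r, (if z i₁ = a then (1:ℝ) else 0) * e l₁ a (z i₂)
            * e l₂ a (z i₃) * 1
            = if z i₁ = a then e l₁ a (z i₂) * e l₂ a (z i₃) else 0 := by
          intro a; by_cases h : z i₁ = a <;> simp [h, mul_assoc]
        rw [Finset.sum_congr rfl (fun a _ => hpt a), Finset.sum_ite_eq]
        simp
      rw [Finset.sum_congr rfl (fun z _ => ins z), Finset.sum_comm]
      refine Finset.sum_congr rfl (fun a _ => ?_)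
      refine (master sbm h12 h13 h14 h23 h24 h34
        (fun t => if t = a then (1:ℝ) else 0) (fun b => e l₁ a b)
        (fun b => e l₂ a b) (fun _ => (1:ℝ))).trans ?_
      have h1 : ∑ t, sbm.p t * (if t = a then (1:ℝ) else 0) = sbm.p a := by
        simp [mul_ite, Finset.sum_ite_eq']
      have h2 : ∑ t, sbm.p t * (1:ℝ) = 1 := by simp [sbm.p_sum]
      rw [h1, h2, mul_one]
      ring
    rw [key1, hmat1]
    refine Finset.sum_congr rfl (fun a _ => ?_)
    rw [hG2 l₁ a, hG2 l₂ a]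
    ring
  · -- second identity
    intro l'
    obtain ⟨C', hC'⟩ := hα_bdd l'
    have hInt3 : Integrable (fun ω => α l₁ (sbm.X i₁ i₂ ω)
        * (α l' (sbm.X i₁ i₃ ω) * α l₂ (sbm.X i₁ i₄ ω))) ℙ := by
      refine integrable_bdd sbm _
        (((hα_meas l₁).comp (sbm.X_meas i₁ i₂)).mul
          (((hα_meas l').comp (sbm.X_meas i₁ i₃)).mul
            ((hα_meas l₂).comp (sbm.X_meas i₁ i₄)))) (C₁ * (C' * C₂)) (fun ω => ?_)
      rw [abs_mul, abs_mul]
      refine mul_le_mul (hC₁ _) ?_ (mul_nonneg (abs_nonneg _) (abs_nonneg _))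
        (le_trans (abs_nonneg (α l₁ (sbm.X i₁ i₂ ω))) (hC₁ (sbm.X i₁ i₂ ω)))
      exact mul_le_mul (hC' _) (hC₂ _) (abs_nonneg _)
        (le_trans (abs_nonneg (α l' (sbm.X i₁ i₃ ω))) (hC' (sbm.X i₁ i₃ ω)))
    have key2 : ∫ ω, α l₁ (sbm.X i₁ i₂ ω) * α l' (sbm.X i₁ i₃ ω)
          * α l₂ (sbm.X i₁ i₄ ω) ∂ℙ
        = ∑ a, sbm.p a * ((∑ b, sbm.p b * e l₁ a b) * (∑ b, sbm.p b * e l' a b)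
            * (∑ b, sbm.p b * e l₂ a b)) := by
      simp only [mul_assoc]
      rw [integral_partition sbm _ hInt3]
      have step1 : ∀ z : Fin n → Fin r,
          ∫ ω in Aev sbm z, α l₁ (sbm.X i₁ i₂ ω)
            * (α l' (sbm.X i₁ i₃ ω) * α l₂ (sbm.X i₁ i₄ ω)) ∂ℙ
          = pev sbm z * (e l₁ (z i₁) (z i₂) * e l' (z i₁) (z i₃)
              * e l₂ (z i₁) (z i₄)) := by
        intro z
        rw [integral_triple sbm h12 h13 h14 h23 h24 h34 z (hα_meas l₁) (hα_meas l')
            (hα_meas l₂),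
          he l₁ i₁ i₂ h12 z, he l' i₁ i₃ h13 z, he l₂ i₁ i₄ h14 z]
        have hne := pev_ne sbm z
        field_simp
      rw [Finset.sum_congr rfl (fun z _ => step1 z)]
      have ins : ∀ z : Fin n → Fin r,
          pev sbm z * (e l₁ (z i₁) (z i₂) * e l' (z i₁) (z i₃) * e l₂ (z i₁) (z i₄))
          = ∑ a, pev sbm z * ((if z i₁ = a then (1:ℝ) else 0) * e l₁ a (z i₂)
              * e l' a (z i₃) * e l₂ a (z i₄)) := by
        intro z
        rw [← Finset.mul_sum]
        congr 1
        have hpt : ∀ a : Fin r, (if z i₁ = a then (1:ℝ) else 0) * e l₁ a (z i₂)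
            * e l' a (z i₃) * e l₂ a (z i₄)
            = if z i₁ = a then e l₁ a (z i₂) * e l' a (z i₃) * e l₂ a (z i₄) else 0 := by
          intro a; by_cases h : z i₁ = a <;> simp [h, mul_assoc]
        rw [Finset.sum_congr rfl (fun a _ => hpt a), Finset.sum_ite_eq]
        simp
      rw [Finset.sum_congr rfl (fun z _ => ins z), Finset.sum_comm]
      refine Finset.sum_congr rfl (fun a _ => ?_)
      refine (master sbm h12 h13 h14 h23 h24 h34
        (fun t => if t = a then (1:ℝ) else 0) (fun b => e l₁ a b)
        (fun b => e l' a b) (fun b => e l₂ a b)).trans ?_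
      have h1 : ∑ t, sbm.p t * (if t = a then (1:ℝ) else 0) = sbm.p a := by
        simp [mul_ite, Finset.sum_ite_eq']
      rw [h1]
      ring
    rw [key2, hmat2 l']
    refine Finset.sum_congr rfl (fun a _ => ?_)
    rw [hG2 l₁ a, hG2 l' a, hG2 l₂ a]
    ring
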